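/- Let P and f be future-directed timelike vectors in V, J an antisymmetric angular momentum tensor, u a future-directed unit timelike vector and τ ∈ ℝ. Then there is exactly one point x on the SSC worldline with respect to f that satisfies η(u,x) = −τ, and its lowered components are x_μ = Σ_ρ J_{μρ}f^ρ/η(f,P) + τP_μ/(−η(u,P)) − (Σ_{λ,ρ} J_{λρ}u^λf^ρ/(−η(f,P)))·P_μ/(−η(u,P)). -/

import Mathlib

noncomputable section

open Finset

abbrev V4 := Fin 4 → ℝ

/-- Sign of the Minkowski metric diag(-1,1,1,1) on the diagonal. -/
def sgn4 (μ : Fin 4) : ℝ := if μ = 0 then -1 else 1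

/-- Index lowering with η = diag(-1,1,1,1): `lo v μ = v_μ`. -/
def lo (v : V4) : V4 := fun μ => sgn4 μ * v μ

/-- Minkowski bilinear form of signature (-,+,+,+). -/
def mink (v w : V4) : ℝ := ∑ μ, lo v μ * w μ

/-- Future-directed timelike vector. -/
def FDTimelike (v : V4) : Prop := mink v v < 0 ∧ 0 < v 0

/-- Future-directed unit timelike vector. -/
def FDUnit (u : V4) : Prop := mink u u = -1 ∧ 0 < u 0

/-- κ = √(−η(P,P)). -/
def kappa (P : V4) : ℝ := Real.sqrt (-(mink P P))

/-- Spin tensor at the point x: S[x]_{μν} = J_{μν} − x_μ P_ν + x_ν P_μ. -/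
def spinT (J : Fin 4 → Fin 4 → ℝ) (P x : V4) (μ ν : Fin 4) : ℝ :=
  J μ ν - lo x μ * lo P ν + lo x ν * lo P μ

/-- SSC worldline with respect to f: points where S[x]_{μν} f^ν = 0. -/
def SSCline (J : Fin 4 → Fin 4 → ℝ) (P f : V4) : Set V4 :=
  {x | ∀ μ, ∑ ν, spinT J P x μ ν * f ν = 0}

lemma sgn4_sq (μ : Fin 4) : sgn4 μ * sgn4 μ = 1 := by
  unfold sgn4; split <;> norm_num

lemma lo_lo (v : V4) (μ : Fin 4) : sgn4 μ * lo v μ = v μ := by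
  unfold lo; rw [← mul_assoc, sgn4_sq, one_mul]

lemma mink_expand (v w : V4) :
    mink v w = -(v 0 * w 0) + v 1 * w 1 + v 2 * w 2 + v 3 * w 3 := by
  simp [mink, lo, sgn4, Fin.sum_univ_four]

lemma mink_neg_of_fdt {v w : V4} (hv : FDTimelike v) (hw : FDTimelike w) :
    mink v w < 0 := by
  have hv1 := hv.1; have hw1 := hw.1
  rw [mink_expand] at hv1 hw1 ⊢
  nlinarith [sq_nonneg (v 1 * w 2 - v 2 * w 1), sq_nonneg (v 1 * w 3 - v 3 * w 1),
    sq_nonneg (v 2 * w 3 - v 3 * w 2), mul_pos hv.2 hw.2,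
    sq_nonneg (v 0 * w 0 - v 1 * w 1 - v 2 * w 2 - v 3 * w 3),
    sq_nonneg (v 0 * w 0 + v 1 * w 1 + v 2 * w 2 + v 3 * w 3), hv.2, hw.2]

lemma mink_comm (v w : V4) : mink v w = mink w v := by
  rw [mink_expand, mink_expand]; ring

lemma mink_eq_sum_lo (v w : V4) : mink v w = ∑ μ, v μ * lo w μ := by
  simp [mink, lo, sgn4, Fin.sum_univ_four]

lemma spin_sum (J : Fin 4 → Fin 4 → ℝ) (P x f : V4) (μ : Fin 4) :
    (∑ ν, spinT J P x μ ν * f ν)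
      = (∑ ρ, J μ ρ * f ρ) - lo x μ * mink f P + lo P μ * mink x f := by
  fin_cases μ <;> · simp [spinT, mink, lo, sgn4, Fin.sum_univ_four]; ring

theorem statement1 (P f u : V4) (τ : ℝ) (J : Fin 4 → Fin 4 → ℝ)
    (hP : FDTimelike P) (hf : FDTimelike f) (hu : FDUnit u)
    (hJ : ∀ μ ν, J μ ν = - J ν μ) :
    (∃! x : V4, x ∈ SSCline J P f ∧ mink u x = -τ) ∧
    (∀ x ∈ SSCline J P f, mink u x = -τ →
      ∀ μ, lo x μ = (∑ ρ, J μ ρ * f ρ) / mink f P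
        + τ * lo P μ / (-(mink u P))
        - ((∑ l, ∑ ρ, J l ρ * u l * f ρ) / (-(mink f P))) * (lo P μ / (-(mink u P)))) := by
  have hu' : FDTimelike u := ⟨by rw [hu.1]; norm_num, hu.2⟩
  have hc : mink f P < 0 := mink_neg_of_fdt hf hP
  have hb : mink u P < 0 := mink_neg_of_fdt hu' hP
  have hc0 : mink f P ≠ 0 := ne_of_lt hc
  have hb0 : mink u P ≠ 0 := ne_of_lt hb
  -- abbreviations
  have hD : (∑ l, ∑ ρ, J l ρ * u l * f ρ) = ∑ l, u l * ∑ ρ, J l ρ * f ρ := by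
    simp only [Fin.sum_univ_four]; ring
  have hform : ∀ x ∈ SSCline J P f, mink u x = -τ →
      ∀ μ, lo x μ = (∑ ρ, J μ ρ * f ρ) / mink f P
        + τ * lo P μ / (-(mink u P))
        - ((∑ l, ∑ ρ, J l ρ * u l * f ρ) / (-(mink f P))) * (lo P μ / (-(mink u P))) := by
    intro x hx hτ
    have h1 : ∀ ν, (∑ ρ, J ν ρ * f ρ) - lo x ν * mink f P + lo P ν * mink x f = 0 := by
      intro ν; rw [← spin_sum]; exact hx ν
    have h3 : (∑ l, ∑ ρ, J l ρ * u l * f ρ) - mink u x * mink f P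
        + mink u P * mink x f = 0 := by
      have h4 : ∑ ν, u ν * ((∑ ρ, J ν ρ * f ρ) - lo x ν * mink f P + lo P ν * mink x f)
          = 0 := by simp [h1]
      rw [hD, mink_eq_sum_lo u x, mink_eq_sum_lo u P]
      simp only [Fin.sum_univ_four] at h4 ⊢
      linear_combination h4
    rw [hτ] at h3
    have hs : mink x f = (-τ * mink f P - (∑ l, ∑ ρ, J l ρ * u l * f ρ)) / mink u P := by
      field_simp
      linarith [h3]
    intro μ
    have h1μ := h1 μ
    rw [hs] at h1μ
    field_simp at h1μ
    simp only [div_neg, neg_div, neg_mul, mul_neg, neg_neg]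
    field_simp
    linear_combination -h1μ
  refine ⟨?_, hform⟩
  -- existence
  set D := (∑ l, ∑ ρ, J l ρ * u l * f ρ) with hD_def
  set x₀ : V4 := fun μ => sgn4 μ * ((∑ ρ, J μ ρ * f ρ) / mink f P
        + τ * lo P μ / (-(mink u P))
        - (D / (-(mink f P))) * (lo P μ / (-(mink u P)))) with hx₀
  have hlox : ∀ μ, lo x₀ μ = (∑ ρ, J μ ρ * f ρ) / mink f P
        + τ * lo P μ / (-(mink u P))
        - (D / (-(mink f P))) * (lo P μ / (-(mink u P))) := by
    intro μ
    show sgn4 μ * (sgn4 μ * _) = _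
    rw [← mul_assoc, sgn4_sq, one_mul]
  have hKf : ∑ μ, (∑ ρ, J μ ρ * f ρ) * f μ = 0 := by
    simp only [Fin.sum_univ_four]
    linear_combination (f 0 * f 0 / 2) * hJ 0 0 + (f 1 * f 1 / 2) * hJ 1 1
      + (f 2 * f 2 / 2) * hJ 2 2 + (f 3 * f 3 / 2) * hJ 3 3
      + f 0 * f 1 * hJ 0 1 + f 0 * f 2 * hJ 0 2 + f 0 * f 3 * hJ 0 3
      + f 1 * f 2 * hJ 1 2 + f 1 * f 3 * hJ 1 3 + f 2 * f 3 * hJ 2 3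
  have hPf : (∑ μ, lo P μ * f μ) = mink f P := mink_comm P f
  have hxf : mink x₀ f = (-τ * mink f P - D) / mink u P := by
    show (∑ μ, lo x₀ μ * f μ) = _
    simp only [hlox]
    rw [show (∑ μ, ((∑ ρ, J μ ρ * f ρ) / mink f P
        + τ * lo P μ / (-(mink u P))
        - (D / (-(mink f P))) * (lo P μ / (-(mink u P)))) * f μ)
      = (∑ μ, (∑ ρ, J μ ρ * f ρ) * f μ) / mink f P
        + τ * (∑ μ, lo P μ * f μ) / (-(mink u P))
        - (D / (-(mink f P))) * ((∑ μ, lo P μ * f μ) / (-(mink u P))) from by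
        simp only [Fin.sum_univ_four]; ring]
    rw [hKf, hPf]
    simp only [div_neg, neg_div, neg_mul, mul_neg, neg_neg]
    field_simp
    ring
  have hux : mink u x₀ = -τ := by
    rw [mink_eq_sum_lo]
    simp only [hlox]
    rw [show (∑ μ, u μ * ((∑ ρ, J μ ρ * f ρ) / mink f P
        + τ * lo P μ / (-(mink u P))
        - (D / (-(mink f P))) * (lo P μ / (-(mink u P)))))
      = (∑ μ, u μ * (∑ ρ, J μ ρ * f ρ)) / mink f P
        + τ * (∑ μ, u μ * lo P μ) / (-(mink u P))
        - (D / (-(mink f P))) * ((∑ μ, u μ * lo P μ) / (-(mink u P))) from by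
        simp only [Fin.sum_univ_four]; ring]
    rw [← hD, ← mink_eq_sum_lo u P, hD_def]
    simp only [div_neg, neg_div, neg_mul, mul_neg, neg_neg]
    field_simp
    ring
  have hmem : x₀ ∈ SSCline J P f := by
    intro μ
    rw [spin_sum, hxf, hlox]
    simp only [div_neg, neg_div, neg_mul, mul_neg, neg_neg]
    field_simp
    ring
  refine ⟨x₀, ⟨hmem, hux⟩, ?_⟩
  intro y ⟨hy1, hy2⟩
  funext μ
  have h := hform y hy1 hy2 μ
  rw [← lo_lo y μ, h, ← hlox μ, lo_lo]
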